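/- Let $\Gamma \in (1,2]$ and $0 < a_\infty^2 < \Gamma - 1$. The number $a_\ast^2 = \frac{6\Gamma-7}{9} + \frac{2(3\Gamma-2)}{9}\cos\left[\frac{\pi}{3} + \frac{1}{3}\arccos\left(\frac{G + 486(\Gamma-1)a_\infty^2 - 243 a_\infty^4}{2(3\Gamma-2)^3}\right)\right]$, with $G = 54\Gamma^3 - 351\Gamma^2 + 558\Gamma - 259$, satisfies the cubic equation $\frac{3a_\ast^6}{(\Gamma-1)^2} + a_\ast^4\frac{-6\Gamma+7}{(\Gamma-1)^2} + a_\ast^2\frac{3\Gamma-5}{\Gamma-1} + 1 - \left(1 - \frac{a_\infty^2}{\Gamma-1}\right)^2 = 0$, provided the argument of the arccosine lies in $[-1,1]$. -/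

import Mathlib

theorem trig_root_of_cubic (Γ ainf2 : ℝ)
    (hΓ1 : 1 < Γ) (hΓ2 : Γ ≤ 2) (hainf0 : 0 < ainf2) (hainf : ainf2 < Γ - 1)
    (harg : -1 ≤ ((54 * Γ ^ 3 - 351 * Γ ^ 2 + 558 * Γ - 259)
        + 486 * (Γ - 1) * ainf2 - 243 * ainf2 ^ 2) / (2 * (3 * Γ - 2) ^ 3) ∧
      ((54 * Γ ^ 3 - 351 * Γ ^ 2 + 558 * Γ - 259)
        + 486 * (Γ - 1) * ainf2 - 243 * ainf2 ^ 2) / (2 * (3 * Γ - 2) ^ 3) ≤ 1) :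
    let ast2 := (6 * Γ - 7) / 9 + 2 * (3 * Γ - 2) / 9 *
      Real.cos (Real.pi / 3 + 1 / 3 *
        Real.arccos (((54 * Γ ^ 3 - 351 * Γ ^ 2 + 558 * Γ - 259)
          + 486 * (Γ - 1) * ainf2 - 243 * ainf2 ^ 2) / (2 * (3 * Γ - 2) ^ 3)))
    3 * ast2 ^ 3 / (Γ - 1) ^ 2 + ast2 ^ 2 * (-6 * Γ + 7) / (Γ - 1) ^ 2 +
      ast2 * (3 * Γ - 5) / (Γ - 1) + 1 - (1 - ainf2 / (Γ - 1)) ^ 2 = 0 := by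
  intro ast2
  set y : ℝ := ((54 * Γ ^ 3 - 351 * Γ ^ 2 + 558 * Γ - 259)
          + 486 * (Γ - 1) * ainf2 - 243 * ainf2 ^ 2) / (2 * (3 * Γ - 2) ^ 3) with hy
  set c : ℝ := Real.cos (Real.pi / 3 + 1 / 3 * Real.arccos y) with hcdef
  have hΓ0 : (Γ - 1 : ℝ) ≠ 0 := by nlinarith
  have hp0 : (3 * Γ - 2 : ℝ) ≠ 0 := by nlinarith
  have hc3 : 4 * c ^ 3 - 3 * c = -y := by
    have h1 : 3 * (Real.pi / 3 + 1 / 3 * Real.arccos y) = Real.pi + Real.arccos y := by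
      ring
    have h2 : Real.cos (3 * (Real.pi / 3 + 1 / 3 * Real.arccos y)) = -y := by
      rw [h1, Real.cos_add, Real.cos_pi, Real.sin_pi, Real.cos_arccos harg.1 harg.2]
      ring
    rw [Real.cos_three_mul] at h2
    rw [← hcdef] at h2
    linarith
  have hc' : (4 * c ^ 3 - 3 * c) * (2 * (3 * Γ - 2) ^ 3)
      = -((54 * Γ ^ 3 - 351 * Γ ^ 2 + 558 * Γ - 259)
          + 486 * (Γ - 1) * ainf2 - 243 * ainf2 ^ 2) := by
    rw [hc3, hy]
    rw [neg_mul, div_mul_cancel₀ _ (mul_ne_zero two_ne_zero (pow_ne_zero 3 hp0))]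
  show 3 * ((6 * Γ - 7) / 9 + 2 * (3 * Γ - 2) / 9 * c) ^ 3 / (Γ - 1) ^ 2
      + ((6 * Γ - 7) / 9 + 2 * (3 * Γ - 2) / 9 * c) ^ 2 * (-6 * Γ + 7) / (Γ - 1) ^ 2
      + ((6 * Γ - 7) / 9 + 2 * (3 * Γ - 2) / 9 * c) * (3 * Γ - 5) / (Γ - 1)
      + 1 - (1 - ainf2 / (Γ - 1)) ^ 2 = 0
  field_simp
  linear_combination 3 * hc'
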